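/- Consider a T-round random process on a probability space with filtration (F_i)_{i=0}^T in which, for each i, p_i is an F_{i−1}-measurable random variable with values in [0,1] and X_i is an F_i-measurable {0,1}-valued random variable with E[X_i | F_{i−1}] = p_i. Let N_i = ∏_{j=1}^{i}(1 − X_j) be the indicator that no heads are realized within the first i steps, and let Y = Σ_{i=1}^{T} p_i N_i. Then for every y > 0, Pr[Y > y] ≤ exp(−y). -/
import Mathlib


open MeasureTheory

/-- `Nfun X k ω = ∏_{j=1}^k (1 - X j ω)`: indicator of no heads in first `k` steps. -/
noncomputable def Nfun {Ω : Type*} (X : ℕ → Ω → ℝ) (k : ℕ) (ω : Ω) : ℝ :=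
  ∏ j ∈ Finset.Icc 1 k, (1 - X j ω)

/-- `Sfun p X k ω = ∑_{i=1}^k p i ω * Nfun X i ω`. -/
noncomputable def Sfun {Ω : Type*} (p X : ℕ → Ω → ℝ) (k : ℕ) (ω : Ω) : ℝ :=
  ∑ i ∈ Finset.Icc 1 k, p i ω * Nfun X i ω

open Classical in
/-- The stopped supermartingale: `M k = N k * exp (S k)`, frozen as soon as `S` exceeds `y`. -/
noncomputable def Mseq {Ω : Type*} (p X : ℕ → Ω → ℝ) (y : ℝ) : ℕ → Ω → ℝ
  | 0 => fun _ => 1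
  | (k+1) => fun ω =>
      if y < Sfun p X k ω then Mseq p X y k ω
      else Nfun X (k+1) ω * Real.exp (Sfun p X (k+1) ω)

/-- The adaptive-coins martingale bound: in a `T`-round process where the bias `pᵢ ∈ [0,1]`
is chosen adaptively (measurable with respect to `F_{i-1}`) and the coin `Xᵢ ∈ {0,1}` is
`F_i`-measurable with `E[Xᵢ | F_{i-1}] = pᵢ`, letting `Nᵢ = ∏_{j≤i} (1 - Xⱼ)` indicate that
no heads occurred in the first `i` steps and `Y = ∑_{i=1}^T pᵢ Nᵢ`, we have
`Pr[Y > y] ≤ exp(-y)` for every `y > 0`. -/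
theorem stmt_5 {Ω : Type*} {m : MeasurableSpace Ω} {μ : Measure Ω}
    [IsProbabilityMeasure μ]
    (T : ℕ) (F : Filtration ℕ m)
    (p X : ℕ → Ω → ℝ)
    (hp_meas : ∀ i ∈ Finset.Icc 1 T, Measurable[F (i - 1)] (p i))
    (hp_range : ∀ i ∈ Finset.Icc 1 T, ∀ ω, p i ω ∈ Set.Icc (0 : ℝ) 1)
    (hX_meas : ∀ i ∈ Finset.Icc 1 T, Measurable[F i] (X i))
    (hX_val : ∀ i ∈ Finset.Icc 1 T, ∀ ω, X i ω = 0 ∨ X i ω = 1)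
    (hcond : ∀ i ∈ Finset.Icc 1 T, μ[X i|F (i - 1)] =ᵐ[μ] p i)
    (y : ℝ) (hy : 0 < y) :
    μ {ω | y < ∑ i ∈ Finset.Icc 1 T, p i ω * ∏ j ∈ Finset.Icc 1 i, (1 - X j ω)}
      ≤ ENNReal.ofReal (Real.exp (-y)) := by
  classical
  set S : ℕ → Ω → ℝ := Sfun p X with hSdef
  set N : ℕ → Ω → ℝ := Nfun X with hNdef
  set M : ℕ → Ω → ℝ := Mseq p X y with hMdef
  have hIcc : ∀ {i k : ℕ}, i ∈ Finset.Icc 1 k → k ≤ T → i ∈ Finset.Icc 1 T := by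
    intro i k hi hk
    simp only [Finset.mem_Icc] at hi ⊢
    exact ⟨hi.1, hi.2.trans hk⟩
  -- N takes values in {0,1}
  have hN01 : ∀ k, k ≤ T → ∀ ω, N k ω = 0 ∨ N k ω = 1 := by
    intro k hk ω
    refine Finset.prod_induction _ (fun x => x = 0 ∨ x = 1) ?_ (Or.inr rfl) ?_
    · rintro a b (rfl | rfl) (rfl | rfl) <;> norm_num
    · intro j hj
      rcases hX_val j (hIcc hj hk) ω with h | h <;> simp [h]
  have hNnn : ∀ k, k ≤ T → ∀ ω, 0 ≤ N k ω := by
    intro k hk ω; rcases hN01 k hk ω with h | h <;> simp [h]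
  have hNle1 : ∀ k, k ≤ T → ∀ ω, N k ω ≤ 1 := by
    intro k hk ω; rcases hN01 k hk ω with h | h <;> simp [h]
  -- recursions
  have hNrec : ∀ k ω, N (k+1) ω = N k ω * (1 - X (k+1) ω) := by
    intro k ω
    simp only [hNdef, Nfun]
    rw [Finset.prod_Icc_succ_top (Nat.le_add_left 1 k)]
  have hSrec : ∀ k ω, S (k+1) ω = S k ω + p (k+1) ω * N (k+1) ω := by
    intro k ω
    simp only [hSdef, Sfun]
    rw [Finset.sum_Icc_succ_top (Nat.le_add_left 1 k)]
  -- monotonicity of S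
  have hSmono : ∀ {k k' : ℕ}, k' ≤ k → k ≤ T → ∀ ω, S k' ω ≤ S k ω := by
    intro k k' hk' hk ω
    apply Finset.sum_le_sum_of_subset_of_nonneg
    · exact Finset.Icc_subset_Icc le_rfl hk'
    · intro i hi _
      have hiT := hIcc hi hk
      exact mul_nonneg (hp_range i hiT ω).1 (hNnn i (by
        simp only [Finset.mem_Icc] at hiT; exact hiT.2) ω)
  have hS0 : ∀ ω, S 0 ω = 0 := by intro ω; simp [hSdef, Sfun]
  have hSnn : ∀ k, k ≤ T → ∀ ω, 0 ≤ S k ω := by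
    intro k hk ω; have := hSmono (Nat.zero_le k) hk ω; rwa [hS0 ω] at this
  have hSleT : ∀ k, k ≤ T → ∀ ω, S k ω ≤ T := by
    intro k hk ω
    calc S k ω ≤ ∑ i ∈ Finset.Icc 1 k, (1 : ℝ) := by
          apply Finset.sum_le_sum
          intro i hi
          have hiT := hIcc hi hk
          have h1 : i ≤ T := by simp only [Finset.mem_Icc] at hiT; exact hiT.2
          calc p i ω * N i ω ≤ 1 * 1 :=
                mul_le_mul (hp_range i hiT ω).2 (hNle1 i h1 ω) (hNnn i h1 ω) zero_le_one
            _ = 1 := by ring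
      _ = k := by simp
      _ ≤ T := by exact_mod_cast hk
  -- measurability
  have hXm : ∀ j k, j ∈ Finset.Icc 1 T → j ≤ k → Measurable[F k] (X j) := by
    intro j k hj hjk
    exact (hX_meas j hj).mono (F.mono hjk) le_rfl
  have hNm : ∀ k, k ≤ T → Measurable[F k] (N k) := by
    intro k hk
    apply Finset.measurable_prod
    intro j hj
    exact measurable_const.sub (hXm j k (hIcc hj hk) (by
      simp only [Finset.mem_Icc] at hj; exact hj.2))
  have hSm : ∀ k, k ≤ T → Measurable[F k] (S k) := by
    intro k hk
    apply Finset.measurable_sum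
    intro i hi
    have hiT := hIcc hi hk
    have h1 : i ≤ k := by simp only [Finset.mem_Icc] at hi; exact hi.2
    have hpm : Measurable[F k] (p i) :=
      (hp_meas i hiT).mono (F.mono (le_trans (Nat.sub_le i 1) h1)) le_rfl
    have hNm' : Measurable[F k] (N i) :=
      (hNm i (by simp only [Finset.mem_Icc] at hiT; exact hiT.2)).mono (F.mono h1) le_rfl
    exact hpm.mul hNm'
  have hMm : ∀ k, k ≤ T → Measurable[F k] (M k) := by
    intro k hk
    induction k with
    | zero => exact measurable_const
    | succ k ih =>
      have hk' : k ≤ T := le_trans (Nat.le_succ k) hk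
      have hSk : Measurable[F (k+1)] (S k) := (hSm k hk').mono (F.mono (Nat.le_succ k)) le_rfl
      have hMk : Measurable[F (k+1)] (M k) := (ih hk').mono (F.mono (Nat.le_succ k)) le_rfl
      have hset : MeasurableSet[F (k+1)] {ω | y < S k ω} :=
        measurableSet_lt measurable_const hSk
      exact Measurable.ite hset hMk ((hNm (k+1) hk).mul ((hSm (k+1) hk).exp))
  -- bounds on M
  have hMbd : ∀ k, k ≤ T → ∀ ω, 0 ≤ M k ω ∧ M k ω ≤ Real.exp T := by
    intro k hk
    induction k with
    | zero =>
      intro ω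
      constructor
      · exact zero_le_one
      · exact Real.one_le_exp (by positivity)
    | succ k ih =>
      intro ω
      have hk' : k ≤ T := le_trans (Nat.le_succ k) hk
      have hM1 : M (k+1) ω
          = if y < S k ω then M k ω else N (k+1) ω * Real.exp (S (k+1) ω) := rfl
      rw [hM1]
      by_cases h : y < S k ω
      · simpa [h] using ih hk' ω
      · simp only [h, if_false]
        constructor
        · exact mul_nonneg (hNnn (k+1) hk ω) (Real.exp_nonneg _)
        · calc N (k+1) ω * Real.exp (S (k+1) ω) ≤ 1 * Real.exp (T : ℝ) :=
              mul_le_mul (hNle1 (k+1) hk ω)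
                (Real.exp_le_exp.2 (hSleT (k+1) hk ω)) (Real.exp_nonneg _)
                zero_le_one
          _ = Real.exp (T : ℝ) := one_mul _
  -- integrability helper
  have hInt : ∀ (f : Ω → ℝ) (C : ℝ), Measurable[F T] f → (∀ ω, |f ω| ≤ C) →
      Integrable f μ := by
    intro f C hf hC
    refine ⟨(hf.mono (F.le T) le_rfl).aestronglyMeasurable, ?_⟩
    exact HasFiniteIntegral.of_bounded (C := C) (ae_of_all μ (by
      simpa [Real.norm_eq_abs] using hC))
  have hMint : ∀ k, k ≤ T → Integrable (M k) μ := by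
    intro k hk
    refine hInt (M k) (Real.exp T) ((hMm k hk).mono (F.mono hk) le_rfl) ?_
    intro ω
    rw [abs_of_nonneg (hMbd k hk ω).1]
    exact (hMbd k hk ω).2
  -- M k = N k * exp (S k) when S k ≤ y
  have hMeq : ∀ k, ∀ ω, ¬ (y < S k ω) → k ≤ T → M k ω = N k ω * Real.exp (S k ω) := by
    intro k ω h hk
    cases k with
    | zero => simp [hMdef, Mseq, hNdef, Nfun, hS0 ω]
    | succ k =>
      have hk' : ¬ (y < S k ω) := fun hc =>
        h (lt_of_lt_of_le hc (hSmono (Nat.le_succ k) hk ω))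
      show (if y < S k ω then M k ω else N (k+1) ω * Real.exp (S (k+1) ω)) = _
      simp [hk']
  -- the supermartingale step
  have hstep : ∀ k, k + 1 ≤ T → ∫ ω, M (k+1) ω ∂μ ≤ ∫ ω, M k ω ∂μ := by
    intro k hk1
    have hk : k ≤ T := le_trans (Nat.le_succ k) hk1
    have hk1' : k + 1 ∈ Finset.Icc 1 T := by simp [Nat.succ_le_of_lt, hk1]
    have hsub : (k + 1) - 1 = k := rfl
    -- the F_k-measurable "coefficient"
    set h : Ω → ℝ := fun ω =>
      if y < S k ω then 0 else N k ω * Real.exp (S k ω) * Real.exp (p (k+1) ω) with hhdef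
    have hpm : Measurable[F k] (p (k+1)) := by
      have := hp_meas (k+1) hk1'; rwa [hsub] at this
    have hhm : Measurable[F k] h := by
      apply Measurable.ite (measurableSet_lt measurable_const (hSm k hk))
        measurable_const
      exact ((hNm k hk).mul (hSm k hk).exp).mul hpm.exp
    have hp01 : ∀ ω, p (k+1) ω ∈ Set.Icc (0:ℝ) 1 := hp_range (k+1) hk1'
    have hX01 : ∀ ω, X (k+1) ω = 0 ∨ X (k+1) ω = 1 := hX_val (k+1) hk1'
    have hhbd : ∀ ω, |h ω| ≤ Real.exp T * Real.exp 1 := by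
      intro ω
      rw [hhdef]
      by_cases hc : y < S k ω
      · simp only [hc, if_true, abs_zero]; positivity
      · simp only [hc, if_false]
        rw [abs_of_nonneg (by
          exact mul_nonneg (mul_nonneg (hNnn k hk ω) (Real.exp_nonneg _)) (Real.exp_nonneg _))]
        apply mul_le_mul _ (Real.exp_le_exp.2 (hp01 ω).2) (Real.exp_nonneg _)
          (Real.exp_nonneg _)
        calc N k ω * Real.exp (S k ω) ≤ 1 * Real.exp (T:ℝ) :=
              mul_le_mul (hNle1 k hk ω) (Real.exp_le_exp.2 (hSleT k hk ω))
                (Real.exp_nonneg _) zero_le_one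
          _ = Real.exp (T:ℝ) := one_mul _
    have hhint : Integrable h μ := hInt h _ (hhm.mono (F.mono hk) le_rfl) hhbd
    have hXbd : ∀ ω, |X (k+1) ω| ≤ 1 := by
      intro ω; rcases hX01 ω with h' | h' <;> simp [h']
    have hXint : Integrable (X (k+1)) μ :=
      hInt _ 1 ((hX_meas (k+1) hk1').mono (F.mono hk1) le_rfl) hXbd
    have hhXint : Integrable (fun ω => h ω * X (k+1) ω) μ := by
      refine hInt _ (Real.exp T * Real.exp 1 * 1) ?_ ?_
      · exact (hhm.mono (F.mono hk) le_rfl).mul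
          ((hX_meas (k+1) hk1').mono (F.mono hk1) le_rfl)
      · intro ω
        rw [abs_mul]
        exact mul_le_mul (hhbd ω) (hXbd ω) (abs_nonneg _) (by positivity)
    have hhpmul : Integrable (fun ω => h ω * p (k+1) ω) μ := by
      refine hInt _ (Real.exp T * Real.exp 1 * 1) ?_ ?_
      · exact (hhm.mono (F.mono hk) le_rfl).mul (hpm.mono (F.mono hk) le_rfl)
      · intro ω
        rw [abs_mul]
        apply mul_le_mul (hhbd ω) _ (abs_nonneg _) (by positivity)
        rw [abs_of_nonneg (hp01 ω).1]; exact (hp01 ω).2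
    -- the conditional expectation swap
    haveI : SigmaFinite (μ.trim (F.le k)) := by infer_instance
    have hswap : ∫ ω, h ω * X (k+1) ω ∂μ = ∫ ω, h ω * p (k+1) ω ∂μ := by
      have h1 : μ[h * X (k+1) | F k] =ᵐ[μ] h * μ[X (k+1) | F k] :=
        condExp_mul_of_stronglyMeasurable_left hhm.stronglyMeasurable hhXint hXint
      have h2 : μ[X (k+1) | F k] =ᵐ[μ] p (k+1) := by
        have := hcond (k+1) hk1'; rwa [hsub] at this
      calc ∫ ω, h ω * X (k+1) ω ∂μ = ∫ ω, (h * X (k+1)) ω ∂μ := rfl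
        _ = ∫ ω, (μ[h * X (k+1) | F k]) ω ∂μ := (integral_condExp (F.le k)).symm
        _ = ∫ ω, h ω * p (k+1) ω ∂μ := by
            apply integral_congr_ae
            filter_upwards [h1, h2] with ω hω1 hω2
            simp only [hω1, Pi.mul_apply, hω2]
    -- pointwise decomposition of M (k+1)
    have hdecomp : ∀ ω, M (k+1) ω =
        (if y < S k ω then M k ω else 0) + h ω * (1 - X (k+1) ω) := by
      intro ω
      show (if y < S k ω then M k ω else N (k+1) ω * Real.exp (S (k+1) ω)) = _
      by_cases hc : y < S k ω
      · simp [hc, hhdef]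
      · simp only [hc, if_false, hhdef, zero_add]
        rw [hNrec k ω, hSrec (k) ω, hNrec k ω]
        rcases hX01 ω with h' | h'
        · rcases hN01 k hk ω with h'' | h'' <;>
            simp [h', h'', Real.exp_add] <;> ring
        · simp [h']
    -- integrands
    have hind_int : Integrable (fun ω => if y < S k ω then M k ω else 0) μ := by
      refine hInt _ (Real.exp T) ?_ ?_
      · exact Measurable.ite
          ((F.mono hk) _ (measurableSet_lt measurable_const (hSm k hk)))
          ((hMm k hk).mono (F.mono hk) le_rfl) measurable_const
      · intro ω
        by_cases hc : y < S k ω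
        · simp only [hc, if_true]
          rw [abs_of_nonneg (hMbd k hk ω).1]; exact (hMbd k hk ω).2
        · simp only [hc, if_false, abs_zero]
          positivity
    have hhpint : Integrable (fun ω => h ω * (1 - p (k+1) ω)) μ := by
      refine hInt _ (Real.exp T * Real.exp 1 * 1) ?_ ?_
      · exact (hhm.mono (F.mono hk) le_rfl).mul
          (measurable_const.sub (hpm.mono (F.mono hk) le_rfl))
      · intro ω
        rw [abs_mul]
        apply mul_le_mul (hhbd ω) _ (abs_nonneg _) (by positivity)
        rw [abs_of_nonneg (by linarith [(hp01 ω).2])]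
        linarith [(hp01 ω).1]
    have hh1Xint : Integrable (fun ω => h ω * (1 - X (k+1) ω)) μ := by
      refine hInt _ (Real.exp T * Real.exp 1 * 1) ?_ ?_
      · exact (hhm.mono (F.mono hk) le_rfl).mul
          (measurable_const.sub ((hX_meas (k+1) hk1').mono (F.mono hk1) le_rfl))
      · intro ω
        rw [abs_mul]
        apply mul_le_mul (hhbd ω) _ (abs_nonneg _) (by positivity)
        rcases hX01 ω with h' | h' <;> simp [h']
    have e1 : ∀ g : Ω → ℝ, Integrable (fun ω => h ω * g ω) μ →
        ∫ ω, h ω * (1 - g ω) ∂μ = (∫ ω, h ω ∂μ) - ∫ ω, h ω * g ω ∂μ := by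
      intro g hg
      rw [← integral_sub hhint hg]
      exact integral_congr_ae (ae_of_all μ fun ω => by ring)
    have hstep2 : ∫ ω, h ω * (1 - X (k+1) ω) ∂μ = ∫ ω, h ω * (1 - p (k+1) ω) ∂μ := by
      rw [e1 _ hhXint, e1 _ hhpmul, hswap]
    -- compute the integral
    have hcomp : ∫ ω, M (k+1) ω ∂μ =
        ∫ ω, ((if y < S k ω then M k ω else 0) + h ω * (1 - p (k+1) ω)) ∂μ := by
      calc ∫ ω, M (k+1) ω ∂μ
          = ∫ ω, ((if y < S k ω then M k ω else 0) + h ω * (1 - X (k+1) ω)) ∂μ :=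
            integral_congr_ae (ae_of_all μ hdecomp)
        _ = (∫ ω, (if y < S k ω then M k ω else 0) ∂μ)
              + ∫ ω, h ω * (1 - X (k+1) ω) ∂μ := integral_add hind_int hh1Xint
        _ = (∫ ω, (if y < S k ω then M k ω else 0) ∂μ)
              + ∫ ω, h ω * (1 - p (k+1) ω) ∂μ := by rw [hstep2]
        _ = ∫ ω, ((if y < S k ω then M k ω else 0) + h ω * (1 - p (k+1) ω)) ∂μ :=
            (integral_add hind_int hhpint).symm
      -- pointwise bound by M k
    rw [hcomp]
    apply integral_mono (hind_int.add hhpint) (hMint k hk)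
    intro ω
    simp only [Pi.add_apply]
    by_cases hc : y < S k ω
    · simp only [hc, if_true, hhdef]
      simp
    · simp only [hc, if_false, hhdef, zero_add]
      rw [hMeq k ω hc hk]
      have hexp : Real.exp (p (k+1) ω) * (1 - p (k+1) ω) ≤ 1 := by
        have h1 : 1 - p (k+1) ω ≤ Real.exp (-(p (k+1) ω)) := by
          have := Real.add_one_le_exp (-(p (k+1) ω)); linarith
        calc Real.exp (p (k+1) ω) * (1 - p (k+1) ω)
            ≤ Real.exp (p (k+1) ω) * Real.exp (-(p (k+1) ω)) := by
              apply mul_le_mul_of_nonneg_left h1 (Real.exp_nonneg _)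
          _ = 1 := by rw [← Real.exp_add]; simp
      calc N k ω * Real.exp (S k ω) * Real.exp (p (k+1) ω) * (1 - p (k+1) ω)
          = (N k ω * Real.exp (S k ω)) * (Real.exp (p (k+1) ω) * (1 - p (k+1) ω)) := by ring
        _ ≤ (N k ω * Real.exp (S k ω)) * 1 := by
            apply mul_le_mul_of_nonneg_left hexp
              (mul_nonneg (hNnn k hk ω) (Real.exp_nonneg _))
        _ = N k ω * Real.exp (S k ω) := mul_one _
  -- integral of M T is at most 1
  have hMT : ∀ k, k ≤ T → ∫ ω, M k ω ∂μ ≤ 1 := by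
    intro k
    induction k with
    | zero => intro _; simp [hMdef, Mseq]
    | succ k ih =>
      intro hk
      exact le_trans (hstep k hk) (ih (le_trans (Nat.le_succ k) hk))
  -- the event inclusion: Y > y implies M T ≥ exp y
  have hincl : ∀ ω, y < S T ω → Real.exp y ≤ M T ω := by
    intro ω hω
    have hex : ∃ k, y < S k ω := ⟨T, hω⟩
    have hk₀ : y < S (Nat.find hex) ω := Nat.find_spec hex
    have hk₀T' : Nat.find hex ≤ T := Nat.find_min' hex hω
    have hk₀pos : Nat.find hex ≠ 0 := by
      intro h0
      rw [h0, hS0 ω] at hk₀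
      exact absurd hk₀ (not_lt.2 hy.le)
    obtain ⟨j, hj'⟩ : ∃ j, Nat.find hex = j + 1 :=
      ⟨Nat.find hex - 1, (Nat.succ_pred_eq_of_pos (Nat.pos_of_ne_zero hk₀pos)).symm⟩
    rw [hj'] at hk₀ hk₀T'
    have hk₀T : j + 1 ≤ T := hk₀T'
    have hj : ¬ (y < S j ω) := Nat.find_min hex (by omega)
    -- M (j+1) ω = N (j+1) ω * exp (S (j+1) ω) and N (j+1) ω = 1
    have hM1 : M (j+1) ω = N (j+1) ω * Real.exp (S (j+1) ω) := by
      show (if y < S j ω then M j ω else N (j+1) ω * Real.exp (S (j+1) ω)) = _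
      simp [hj]
    have hN1 : N (j+1) ω = 1 := by
      rcases hN01 (j+1) hk₀T ω with h | h
      · exfalso
        have : S (j+1) ω = S j ω := by rw [hSrec j ω, h]; ring
        rw [this] at hk₀
        exact hj hk₀
      · exact h
    have hMk₀ : Real.exp y ≤ M (j+1) ω := by
      rw [hM1, hN1, one_mul]
      exact Real.exp_le_exp.2 hk₀.le
    -- M stays frozen from k₀ to T
    have hfrozen : ∀ i, j + 1 ≤ i → i ≤ T → M i ω = M (j+1) ω := by
      intro i hi hiT
      induction i with
      | zero => omega
      | succ i ih =>
        rcases Nat.lt_or_ge (j+1) (i+1) with hlt | hge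
        · have hji : j + 1 ≤ i := Nat.lt_succ_iff.1 hlt
          have hiT' : i ≤ T := le_trans (Nat.le_succ i) hiT
          have hSi : y < S i ω :=
            lt_of_lt_of_le hk₀ (hSmono hji hiT' ω)
          have : M (i+1) ω = M i ω := by
            show (if y < S i ω then M i ω else _) = M i ω
            simp [hSi]
          rw [this, ih hji hiT']
        · have : i + 1 = j + 1 := le_antisymm hge hi
          rw [this]
    have : M T ω = M (j+1) ω := hfrozen T (by omega) le_rfl
    rw [this]
    exact hMk₀
  -- Markov inequality finish
  have hMTnn : 0 ≤ᵐ[μ] M T := ae_of_all μ (fun ω => (hMbd T le_rfl ω).1)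
  have hmark := mul_meas_ge_le_integral_of_nonneg hMTnn (hMint T le_rfl) (Real.exp y)
  have hineq : (μ {ω | Real.exp y ≤ M T ω}).toReal ≤ Real.exp (-y) := by
    have hpos : (0:ℝ) < Real.exp y := Real.exp_pos y
    have h1 : Real.exp y * (μ {ω | Real.exp y ≤ M T ω}).toReal ≤ 1 :=
      le_trans hmark (hMT T le_rfl)
    rw [Real.exp_neg, inv_eq_one_div, le_div_iff₀ hpos]
    linarith
  calc μ {ω | y < ∑ i ∈ Finset.Icc 1 T, p i ω * ∏ j ∈ Finset.Icc 1 i, (1 - X j ω)}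
      = μ {ω | y < S T ω} := rfl
    _ ≤ μ {ω | Real.exp y ≤ M T ω} := measure_mono (fun ω hω => hincl ω hω)
    _ = ENNReal.ofReal ((μ {ω | Real.exp y ≤ M T ω}).toReal) := by
        rw [ENNReal.ofReal_toReal (measure_ne_top μ _)]
    _ ≤ ENNReal.ofReal (Real.exp (-y)) := ENNReal.ofReal_le_ofReal hineq
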